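/- arXiv:1602.03165 — 4 statements merged into one kernel-verified Lean document; each statement's English description precedes it below -/
import Mathlib

section
/- Let G = ℤ_{A₁} × ⋯ × ℤ_{A_N} be a product of finite cyclic groups (A₁,…,A_N positive integers) and let a₁,…,a_N be positive integers with a_j ≤ A_j. The cube Q_{a₁,…,a_N} = [a₁] × ⋯ × [a_N] tiles G by translations (i.e., some set of translates of Q_{a₁,…,a_N} partitions G) if and only if a_j divides A_j for every j = 1,…,N. -/
/-- The discrete cube `[a₁] × ⋯ × [a_N]` inside `ℤ_{A₁} × ⋯ × ℤ_{A_N}`. -/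
def cube {N : ℕ} (A a : Fin N → ℕ) : Finset (∀ j, ZMod (A j)) :=
  Finset.image (fun v : ∀ j, Fin (a j) => fun j => ((v j : ℕ) : ZMod (A j))) Finset.univ

/-- `E` tiles the abelian group `G` with translate set `T`: every `x` has a unique
representation `x = e + t` with `e ∈ E`, `t ∈ T`. -/
def Tiles {G : Type*} [AddCommGroup G] (E T : Finset G) : Prop :=
  ∀ x : G, ∃! p : G × G, p.1 ∈ E ∧ p.2 ∈ T ∧ x = p.1 + p.2

lemma mem_cube_iff {N : ℕ} (A a : Fin N → ℕ) [∀ j, NeZero (A j)]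
    (hle : ∀ j, a j ≤ A j) (x : ∀ j, ZMod (A j)) :
    x ∈ cube A a ↔ ∀ j, (x j).val < a j := by
  constructor
  · intro hx
    simp only [cube, Finset.mem_image, Finset.mem_univ, true_and] at hx
    obtain ⟨v, rfl⟩ := hx
    intro j
    rw [ZMod.val_natCast_of_lt (lt_of_lt_of_le (v j).2 (hle j))]
    exact (v j).2
  · intro h
    simp only [cube, Finset.mem_image, Finset.mem_univ, true_and]
    exact ⟨fun j => ⟨(x j).val, h j⟩, funext fun j => ZMod.natCast_rightInverse (x j)⟩

theorem cube_tiles_iff_dvd {N : ℕ} (A a : Fin N → ℕ) [∀ j, NeZero (A j)]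
    (ha : ∀ j, 0 < a j) (hle : ∀ j, a j ≤ A j) :
    (∃ T : Finset (∀ j, ZMod (A j)), Tiles (cube A a) T) ↔ ∀ j, a j ∣ A j := by
  constructor
  · rintro ⟨T, hT⟩ j
    classical
    set δ : ZMod (A j) → (∀ k, ZMod (A k)) :=
      fun c => Function.update (fun _ => 0) j c with hδ
    choose p hp hu using fun c : ZMod (A j) => hT (δ c)
    set F : ZMod (A j) → (∀ k, ZMod (A k)) := fun c => (p c).2 with hF
    have key : ∀ t ∈ Finset.image F Finset.univ,
        (Finset.univ.filter (fun c => F c = t)).card = a j := by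
      intro t ht
      obtain ⟨c0, -, hc0⟩ := Finset.mem_image.1 ht
      simp only [hF] at hc0
      obtain ⟨he0, ht0, hx0⟩ := hp c0
      rw [hc0] at ht0 hx0
      have hfilter : Finset.univ.filter (fun c => F c = t)
          = Finset.image (fun v : Fin (a j) => t j + ((v : ℕ) : ZMod (A j))) Finset.univ := by
        ext c
        simp only [Finset.mem_filter, Finset.mem_univ, true_and, Finset.mem_image]
        constructor
        · intro hc
          obtain ⟨he, htm, hx⟩ := hp c
          simp only [hF] at hc
          rw [hc] at hx
          have hev := (mem_cube_iff A a hle _).1 he j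
          have hcj := congrFun hx j
          rw [hδ] at hcj
          simp only [Function.update_self, Pi.add_apply] at hcj
          refine ⟨⟨((p c).1 j).val, hev⟩, ?_⟩
          rw [ZMod.natCast_rightInverse ((p c).1 j), add_comm]
          exact hcj.symm
        · rintro ⟨v, rfl⟩
          set e : ∀ k, ZMod (A k) :=
            Function.update (p c0).1 j (((v : ℕ) : ZMod (A j))) with hedef
          have hecube : e ∈ cube A a := by
            rw [mem_cube_iff A a hle]
            intro k
            by_cases hk : k = j
            · subst hk
              rw [hedef]
              simp only [Function.update_self]
              rw [ZMod.val_natCast_of_lt (lt_of_lt_of_le v.2 (hle k))]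
              exact v.2
            · rw [hedef, Function.update_of_ne hk]
              exact (mem_cube_iff A a hle _).1 he0 k
          have hsum : δ (t j + ((v : ℕ) : ZMod (A j))) = e + t := by
            funext k
            by_cases hk : k = j
            · subst hk
              rw [hδ, hedef]
              simp only [Function.update_self, Pi.add_apply]
              exact add_comm _ _
            · rw [hδ, hedef]
              simp only [Function.update_of_ne hk, Pi.add_apply]
              have := congrFun hx0 k
              rw [hδ] at this
              simpa [Function.update_of_ne hk] using this
          have := hu (t j + ((v : ℕ) : ZMod (A j))) (e, t) ⟨hecube, ht0, hsum⟩
          show (p (t j + ((v : ℕ) : ZMod (A j)))).2 = t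
          rw [← this]
      rw [hfilter]
      rw [Finset.card_image_of_injective _ ?_, Finset.card_univ, Fintype.card_fin]
      intro v w hvw
      have : ((v : ℕ) : ZMod (A j)) = ((w : ℕ) : ZMod (A j)) := by
        exact add_left_cancel hvw
      have := congrArg ZMod.val this
      rw [ZMod.val_natCast_of_lt (lt_of_lt_of_le v.2 (hle j)),
        ZMod.val_natCast_of_lt (lt_of_lt_of_le w.2 (hle j))] at this
      exact Fin.ext this
    have hcard : (Finset.univ : Finset (ZMod (A j))).card
        = ∑ t ∈ Finset.image F Finset.univ,
            (Finset.univ.filter (fun c => F c = t)).card :=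
      Finset.card_eq_sum_card_fiberwise (fun c _ => Finset.mem_image_of_mem F (Finset.mem_univ c))
    rw [Finset.sum_congr rfl key, Finset.sum_const, smul_eq_mul] at hcard
    rw [Finset.card_univ, ZMod.card] at hcard
    exact ⟨_, by rw [hcard, mul_comm]⟩
  · intro hdvd
    classical
    refine ⟨Finset.image
      (fun w : ∀ j, Fin (A j / a j) => fun j => (((w j : ℕ) * a j : ℕ) : ZMod (A j)))
      Finset.univ, ?_⟩
    intro x
    -- determination lemma
    have det : ∀ (e : ∀ k, ZMod (A k)) (w : ∀ k, Fin (A k / a k)),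
        e ∈ cube A a →
        x = e + (fun k => (((w k : ℕ) * a k : ℕ) : ZMod (A k))) →
        ∀ k, (e k).val = (x k).val % a k ∧ (w k : ℕ) = (x k).val / a k := by
      intro e w he hx k
      have hev := (mem_cube_iff A a hle _).1 he k
      have hAk : A k = A k / a k * a k := (Nat.div_mul_cancel (hdvd k)).symm
      have hlt : (e k).val + (w k : ℕ) * a k < A k := by
        calc (e k).val + (w k : ℕ) * a k < a k + (w k : ℕ) * a k := by omega
        _ = ((w k : ℕ) + 1) * a k := by ring
        _ ≤ A k / a k * a k := Nat.mul_le_mul_right _ (w k).2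
        _ = A k := hAk.symm
      have hxk : (x k).val = (e k).val + (w k : ℕ) * a k := by
        have : x k = (((e k).val + (w k : ℕ) * a k : ℕ) : ZMod (A k)) := by
          rw [congrFun hx k]
          simp only [Pi.add_apply]
          push_cast
          rw [ZMod.natCast_rightInverse (e k)]
        rw [this, ZMod.val_natCast_of_lt hlt]
      constructor
      · rw [hxk, Nat.add_mul_mod_self_right, Nat.mod_eq_of_lt hev]
      · rw [hxk, Nat.add_mul_div_right _ _ (ha k), Nat.div_eq_of_lt hev, zero_add]
    -- canonical decomposition
    set e₀ : ∀ k, ZMod (A k) := fun k => (((x k).val % a k : ℕ) : ZMod (A k)) with he₀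
    have hwlt : ∀ k, (x k).val / a k < A k / a k := fun k =>
      Nat.div_lt_div_of_lt_of_dvd (hdvd k) ((x k).val_lt)
    set w₀ : ∀ k, Fin (A k / a k) := fun k => ⟨(x k).val / a k, hwlt k⟩ with hw₀
    set t₀ : ∀ k, ZMod (A k) := fun k => ((((x k).val / a k) * a k : ℕ) : ZMod (A k)) with ht₀
    have he₀c : e₀ ∈ cube A a := by
      rw [mem_cube_iff A a hle]
      intro k
      rw [he₀, ZMod.val_natCast_of_lt (lt_of_lt_of_le (Nat.mod_lt _ (ha k)) (hle k))]
      exact Nat.mod_lt _ (ha k)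
    have ht₀m : t₀ ∈ Finset.image
        (fun w : ∀ j, Fin (A j / a j) => fun j => (((w j : ℕ) * a j : ℕ) : ZMod (A j)))
        Finset.univ := Finset.mem_image_of_mem _ (Finset.mem_univ w₀)
    have hx₀ : x = e₀ + t₀ := by
      funext k
      rw [Pi.add_apply, he₀, ht₀]
      rw [← Nat.cast_add, Nat.mod_add_div' (x k).val (a k), ZMod.natCast_rightInverse (x k)]
    refine ⟨(e₀, t₀), ⟨he₀c, ht₀m, hx₀⟩, ?_⟩
    rintro ⟨e, t⟩ ⟨he, htm, hx⟩
    obtain ⟨w, -, rfl⟩ := Finset.mem_image.1 htm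
    have hd := det e w he hx
    have he' : e = e₀ := by
      funext k
      show e k = (((x k).val % a k : ℕ) : ZMod (A k))
      rw [← (hd k).1, ZMod.natCast_rightInverse (e k)]
    have ht' : (fun k => (((w k : ℕ) * a k : ℕ) : ZMod (A k))) = t₀ := by
      funext k
      show (((w k : ℕ) * a k : ℕ) : ZMod (A k)) = (((x k).val / a k * a k : ℕ) : ZMod (A k))
      rw [(hd k).2]
    rw [Prod.mk.injEq]
    exact ⟨he', ht'⟩
end

section
/- Let G = ℤ_{A₁} × ⋯ × ℤ_{A_N} be a product of finite cyclic groups and let a₁,…,a_N be positive integers with a_j ≤ A_j. The cube Q_{a₁,…,a_N} = [a₁] × ⋯ × [a_N] is a spectral set in G if and only if a_j divides A_j for every j = 1,…,N. -/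
/-- The character of `ℤ_{A₁} × ⋯ × ℤ_{A_N}` attached to `λ`:
`e_λ(x) = exp(2πi Σ_j λ_j x_j / A_j)`. -/
noncomputable def ePi {N : ℕ} (A : Fin N → ℕ) (lam x : ∀ j, ZMod (A j)) : ℂ :=
  Complex.exp (2 * (Real.pi : ℂ) * Complex.I *
    ∑ j, ((lam j).val : ℂ) * ((x j).val : ℂ) / (A j : ℂ))

/-- `Λ` is a spectrum of `E`: the characters `e_λ`, `λ ∈ Λ`, restricted to `E`, are
pairwise orthogonal and there are `|E|` of them (hence they form an orthogonal basis
of the functions on `E`). -/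
def IsSpectrum {N : ℕ} (A : Fin N → ℕ) (E L : Finset (∀ j, ZMod (A j))) : Prop :=
  L.card = E.card ∧
  ∀ l ∈ L, ∀ m ∈ L, l ≠ m →
    ∑ x ∈ E, ePi A l x * (starRingEnd ℂ) (ePi A m x) = 0

open Finset Complex

noncomputable def e1 (A : ℕ) (d : ℤ) : ℂ :=
  Complex.exp (2 * (Real.pi : ℂ) * Complex.I * d / A)

lemma e1_pow (A : ℕ) (d : ℤ) (t : ℕ) : e1 A d ^ t = e1 A (d * t) := by
  rw [e1, e1, ← Complex.exp_nat_mul]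
  congr 1
  push_cast
  ring

lemma e1_mul (A : ℕ) (d d' : ℤ) : e1 A d * e1 A d' = e1 A (d + d') := by
  rw [e1, e1, e1, ← Complex.exp_add]; congr 1; push_cast; ring

lemma e1_conj (A : ℕ) (d : ℤ) : (starRingEnd ℂ) (e1 A d) = e1 A (-d) := by
  rw [e1, e1, ← Complex.exp_conj]
  congr 1
  simp only [map_div₀, map_mul, Complex.conj_I, Complex.conj_ofReal, map_ofNat,
    map_intCast, map_natCast]
  push_cast
  ring

lemma e1_zero (A : ℕ) : e1 A 0 = 1 := by simp [e1]

lemma e1_eq_one_iff (A : ℕ) (hA : A ≠ 0) (d : ℤ) : e1 A d = 1 ↔ (A : ℤ) ∣ d := by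
  rw [e1, Complex.exp_eq_one_iff]
  constructor
  · rintro ⟨n, hn⟩
    refine ⟨n, ?_⟩
    have hA' : (A : ℂ) ≠ 0 := Nat.cast_ne_zero.mpr hA
    have hI : (2 : ℂ) * (Real.pi : ℂ) * Complex.I ≠ 0 := by
      simp [Real.pi_ne_zero, Complex.I_ne_zero]
    have h2 : (2 * (Real.pi : ℂ) * Complex.I) * ((d : ℂ) / A)
        = (2 * (Real.pi : ℂ) * Complex.I) * n := by
      rw [← mul_div_assoc, hn]; ring
    have h3 : (d : ℂ) / A = n := mul_left_cancel₀ hI h2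
    have h4 : (d : ℂ) = A * n := by
      rw [div_eq_iff hA'] at h3; rw [h3]; ring
    exact_mod_cast h4
  · rintro ⟨n, rfl⟩
    refine ⟨n, ?_⟩
    have hA' : (A : ℂ) ≠ 0 := Nat.cast_ne_zero.mpr hA
    field_simp
    simp

lemma geom_zero_iff (z : ℂ) (n : ℕ) (hn : 0 < n) :
    (∑ t ∈ Finset.range n, z ^ t = 0) ↔ z ^ n = 1 ∧ z ≠ 1 := by
  by_cases hz : z = 1
  · subst hz
    have hn' : (n : ℂ) ≠ 0 := Nat.cast_ne_zero.mpr hn.ne'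
    simp [hn']
  · rw [geom_sum_eq hz, div_eq_zero_iff, sub_eq_zero]
    constructor
    · rintro (h | h)
      · exact ⟨h, hz⟩
      · exact absurd (sub_eq_zero.mp h) hz
    · rintro ⟨h, -⟩
      exact Or.inl h

lemma zmod_eq_iff_dvd (A : ℕ) [NeZero A] (u v : ZMod A) :
    u = v ↔ (A : ℤ) ∣ ((u.val : ℤ) - (v.val : ℤ)) := by
  rw [← ZMod.intCast_zmod_eq_zero_iff_dvd]
  push_cast [ZMod.natCast_val, ZMod.intCast_cast]
  constructor
  · intro h; simp [h]
  · intro h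
    have : (u : ZMod A) - v = 0 := by
      simpa using h
    linear_combination this

lemma cube_sum_eq {N : ℕ} (A a : Fin N → ℕ) [∀ j, NeZero (A j)] (hle : ∀ j, a j ≤ A j)
    (l m : ∀ j, ZMod (A j)) :
    ∑ x ∈ cube A a, ePi A l x * (starRingEnd ℂ) (ePi A m x)
      = ∏ j, ∑ t ∈ Finset.range (a j),
          e1 (A j) (((l j).val : ℤ) - ((m j).val : ℤ)) ^ t := by
  have hinj : ∀ v ∈ (Finset.univ : Finset (∀ j, Fin (a j))), ∀ w ∈ Finset.univ,
      (fun j => ((v j : ℕ) : ZMod (A j))) = (fun j => ((w j : ℕ) : ZMod (A j))) → v = w := by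
    intro v _ w _ h
    funext j
    have h2 := congrFun h j
    have hv := ZMod.val_natCast_of_lt (lt_of_lt_of_le (v j).isLt (hle j))
    have hw := ZMod.val_natCast_of_lt (lt_of_lt_of_le (w j).isLt (hle j))
    apply Fin.ext
    rw [← hv, ← hw, h2]
  rw [cube, Finset.sum_image hinj]
  have step1 : (∏ j, ∑ t ∈ Finset.range (a j),
      e1 (A j) (((l j).val : ℤ) - ((m j).val : ℤ)) ^ t)
      = ∏ j, ∑ t : Fin (a j), e1 (A j) (((l j).val : ℤ) - ((m j).val : ℤ)) ^ (t : ℕ) :=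
    Finset.prod_congr rfl fun j _ => (Fin.sum_univ_eq_sum_range _ _).symm
  rw [step1, Finset.prod_univ_sum, Fintype.piFinset_univ]
  refine Finset.sum_congr rfl fun v _ => ?_
  have hval : ∀ j, (((v j : ℕ) : ZMod (A j))).val = (v j : ℕ) :=
    fun j => ZMod.val_natCast_of_lt (lt_of_lt_of_le (v j).isLt (hle j))
  simp only [e1_pow]
  simp only [e1]
  rw [← Complex.exp_sum, ePi, ePi, ← Complex.exp_conj, ← Complex.exp_add]
  congr 1
  simp only [map_mul, map_ofNat, Complex.conj_ofReal, Complex.conj_I, map_sum, map_div₀,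
    map_natCast, hval]
  rw [Finset.mul_sum, Finset.mul_sum, ← Finset.sum_add_distrib]
  refine Finset.sum_congr rfl fun j _ => ?_
  push_cast
  ring

lemma ortho_iff {N : ℕ} (A a : Fin N → ℕ) [∀ j, NeZero (A j)] (ha : ∀ j, 0 < a j)
    (hle : ∀ j, a j ≤ A j) (l m : ∀ j, ZMod (A j)) :
    (∑ x ∈ cube A a, ePi A l x * (starRingEnd ℂ) (ePi A m x)) = 0
      ↔ ∃ j, (A j : ℤ) ∣ (((l j).val : ℤ) - ((m j).val : ℤ)) * a j ∧ l j ≠ m j := by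
  rw [cube_sum_eq A a hle, Finset.prod_eq_zero_iff]
  constructor
  · rintro ⟨j, -, hj⟩
    rw [geom_zero_iff _ _ (ha j)] at hj
    obtain ⟨h1, h2⟩ := hj
    rw [e1_pow, e1_eq_one_iff _ (NeZero.ne _)] at h1
    refine ⟨j, by exact_mod_cast h1, ?_⟩
    intro hlm
    apply h2
    rw [e1_eq_one_iff _ (NeZero.ne _)]
    exact (zmod_eq_iff_dvd _ _ _).mp hlm
  · rintro ⟨j, h1, h2⟩
    refine ⟨j, Finset.mem_univ j, ?_⟩
    rw [geom_zero_iff _ _ (ha j), e1_pow, e1_eq_one_iff _ (NeZero.ne _)]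
    refine ⟨by exact_mod_cast h1, ?_⟩
    intro hone
    rw [e1_eq_one_iff _ (NeZero.ne _)] at hone
    exact h2 ((zmod_eq_iff_dvd _ _ _).mpr hone)

lemma cube_card {N : ℕ} (A a : Fin N → ℕ) [∀ j, NeZero (A j)] (hle : ∀ j, a j ≤ A j) :
    (cube A a).card = ∏ j, a j := by
  rw [cube, Finset.card_image_of_injective _ ?_, Finset.card_univ, Fintype.card_pi]
  · simp
  · intro v w h
    funext j
    have h2 := congrFun h j
    have hv := ZMod.val_natCast_of_lt (lt_of_lt_of_le (v j).isLt (hle j))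
    have hw := ZMod.val_natCast_of_lt (lt_of_lt_of_le (w j).isLt (hle j))
    apply Fin.ext
    rw [← hv, ← hw]
    exact congrArg ZMod.val h2

lemma backward_dir {N : ℕ} (A a : Fin N → ℕ) [∀ j, NeZero (A j)] (ha : ∀ j, 0 < a j)
    (hle : ∀ j, a j ≤ A j) (h : ∀ j, a j ∣ A j) :
    ∃ L : Finset (∀ j, ZMod (A j)), IsSpectrum A (cube A a) L := by
  classical
  set b : Fin N → ℕ := fun j => A j / a j with hbdef
  have hab : ∀ j, a j * b j = A j := fun j => Nat.mul_div_cancel' (h j)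
  have hbpos : ∀ j, 0 < b j := fun j => Nat.div_pos (hle j) (ha j)
  set f : (∀ j, Fin (a j)) → (∀ j, ZMod (A j)) :=
    fun v => fun j => (((v j : ℕ) * b j : ℕ) : ZMod (A j)) with hfdef
  have hlt : ∀ (v : ∀ j, Fin (a j)) (j : Fin N), (v j : ℕ) * b j < A j := by
    intro v j
    rw [← hab j]
    exact (Nat.mul_lt_mul_right (hbpos j)).mpr (v j).isLt
  have hval : ∀ (v : ∀ j, Fin (a j)) (j : Fin N),
      ((((v j : ℕ) * b j : ℕ) : ZMod (A j))).val = (v j : ℕ) * b j :=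
    fun v j => ZMod.val_natCast_of_lt (hlt v j)
  have hinj : Function.Injective f := by
    intro v w hvw
    funext j
    have h2 : (((v j : ℕ) * b j : ℕ) : ZMod (A j)) = (((w j : ℕ) * b j : ℕ) : ZMod (A j)) :=
      congrFun hvw j
    have h3 : (v j : ℕ) * b j = (w j : ℕ) * b j := by
      rw [← hval v j, ← hval w j]
      exact congrArg ZMod.val h2
    exact Fin.ext (Nat.eq_of_mul_eq_mul_right (hbpos j) h3)
  refine ⟨Finset.image f Finset.univ, ?_, ?_⟩
  · rw [Finset.card_image_of_injective _ hinj, cube_card A a hle, Finset.card_univ,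
      Fintype.card_pi]
    simp
  · intro l hl m hm hlm
    obtain ⟨v, -, rfl⟩ := Finset.mem_image.mp hl
    obtain ⟨w, -, rfl⟩ := Finset.mem_image.mp hm
    have hj : ∃ j, v j ≠ w j := by
      by_contra hc
      push_neg at hc
      exact hlm (congrArg f (funext hc))
    obtain ⟨j, hj⟩ := hj
    rw [ortho_iff A a ha hle]
    have hAint : (A j : ℤ) = (a j : ℤ) * (b j : ℤ) := by exact_mod_cast (hab j).symm
    refine ⟨j, ⟨(v j : ℤ) - (w j : ℤ), ?_⟩, ?_⟩
    · show ((((f v) j).val : ℤ) - (((f w) j).val : ℤ)) * (a j) = _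
      rw [hfdef]
      simp only [hval v j, hval w j]
      push_cast
      rw [hAint]
      ring
    · intro heq
      have h3 : (v j : ℕ) * b j = (w j : ℕ) * b j := by
        rw [← hval v j, ← hval w j]
        exact congrArg ZMod.val heq
      exact hj (Fin.ext (Nat.eq_of_mul_eq_mul_right (hbpos j) h3))

lemma forward_dir {N : ℕ} (A a : Fin N → ℕ) [∀ j, NeZero (A j)] (ha : ∀ j, 0 < a j)
    (hle : ∀ j, a j ≤ A j) (L : Finset (∀ j, ZMod (A j)))
    (hL : IsSpectrum A (cube A a) L) : ∀ j, a j ∣ A j := by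
  classical
  obtain ⟨hcard, horth⟩ := hL
  set g : Fin N → ℕ := fun j => Nat.gcd (a j) (A j) with hgdef
  have hgpos : ∀ j, 0 < g j := by
    intro j
    exact Nat.gcd_pos_of_pos_left _ (ha j)
  have hgle : ∀ j, g j ≤ a j := fun j => Nat.le_of_dvd (ha j) (Nat.gcd_dvd_left _ _)
  set S : (∀ j, Fin (g j)) → ℂ :=
    fun ξ => ∑ l ∈ L, ∏ j, e1 (A j) ((l j).val) ^ (ξ j : ℕ) with hSdef
  -- the off-diagonal products vanish
  have off : ∀ l ∈ L, ∀ m ∈ L, l ≠ m →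
      (∏ j, ∑ t ∈ Finset.range (g j),
        e1 (A j) (((l j).val : ℤ) - ((m j).val : ℤ)) ^ t) = 0 := by
    intro l hl m hm hlm
    obtain ⟨j, hd, hne⟩ := (ortho_iff A a ha hle l m).mp (horth l hl m hm hlm)
    refine Finset.prod_eq_zero (Finset.mem_univ j) ?_
    rw [geom_zero_iff _ _ (hgpos j), e1_pow, e1_eq_one_iff _ (NeZero.ne _)]
    constructor
    · obtain ⟨c, hc⟩ := hd
      have hgcd : (g j : ℤ) = (a j : ℤ) * Nat.gcdA (a j) (A j)
          + (A j : ℤ) * Nat.gcdB (a j) (A j) := Nat.gcd_eq_gcd_ab (a j) (A j)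
      refine ⟨c * Nat.gcdA (a j) (A j)
        + (((l j).val : ℤ) - ((m j).val : ℤ)) * Nat.gcdB (a j) (A j), ?_⟩
      linear_combination (((l j).val : ℤ) - ((m j).val : ℤ)) * hgcd
        + (Nat.gcdA (a j) (A j)) * hc
    · intro hone
      rw [e1_eq_one_iff _ (NeZero.ne _)] at hone
      exact hne ((zmod_eq_iff_dvd _ _ _).mpr hone)
  -- the key identity
  have key : ∑ ξ : (∀ j, Fin (g j)), S ξ * (starRingEnd ℂ) (S ξ)
      = (L.card : ℂ) * ∏ j, (g j : ℂ) := by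
    have expand : ∀ ξ : (∀ j, Fin (g j)), S ξ * (starRingEnd ℂ) (S ξ)
        = ∑ l ∈ L, ∑ m ∈ L, ∏ j,
            e1 (A j) (((l j).val : ℤ) - ((m j).val : ℤ)) ^ (ξ j : ℕ) := by
      intro ξ
      rw [hSdef]
      simp only
      rw [map_sum, Finset.sum_mul_sum]
      refine Finset.sum_congr rfl fun l _ => Finset.sum_congr rfl fun m _ => ?_
      rw [map_prod, ← Finset.prod_mul_distrib]
      refine Finset.prod_congr rfl fun j _ => ?_
      rw [map_pow, e1_conj, ← mul_pow, e1_mul, ← sub_eq_add_neg]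
    rw [Finset.sum_congr rfl (fun ξ _ => expand ξ), Finset.sum_comm]
    have swap2 : ∀ l ∈ L, ∑ ξ : (∀ j, Fin (g j)), ∑ m ∈ L, ∏ j,
          e1 (A j) (((l j).val : ℤ) - ((m j).val : ℤ)) ^ (ξ j : ℕ)
        = ∑ m ∈ L, ∏ j, ∑ t ∈ Finset.range (g j),
            e1 (A j) (((l j).val : ℤ) - ((m j).val : ℤ)) ^ t := by
      intro l _
      rw [Finset.sum_comm]
      refine Finset.sum_congr rfl fun m _ => ?_
      symm
      have step1 : (∏ j, ∑ t ∈ Finset.range (g j),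
            e1 (A j) (((l j).val : ℤ) - ((m j).val : ℤ)) ^ t)
          = ∏ j, ∑ t : Fin (g j),
              e1 (A j) (((l j).val : ℤ) - ((m j).val : ℤ)) ^ (t : ℕ) :=
        Finset.prod_congr rfl fun j _ => (Fin.sum_univ_eq_sum_range _ _).symm
      rw [step1, Finset.prod_univ_sum, Fintype.piFinset_univ]
    rw [Finset.sum_congr rfl swap2]
    have diag : ∀ l ∈ L, ∑ m ∈ L, ∏ j, ∑ t ∈ Finset.range (g j),
          e1 (A j) (((l j).val : ℤ) - ((m j).val : ℤ)) ^ t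
        = ∏ j, (g j : ℂ) := by
      intro l hl
      rw [Finset.sum_eq_single_of_mem l hl (fun m hm hne => off l hl m hm hne.symm)]
      refine Finset.prod_congr rfl fun j _ => ?_
      rw [sub_self, e1_zero]
      simp
    rw [Finset.sum_congr rfl diag, Finset.sum_const, nsmul_eq_mul]
  -- positivity and the size bound
  have hub : L.card ≤ ∏ j, g j := by
    have hsum : ((∑ ξ : (∀ j, Fin (g j)), Complex.normSq (S ξ) : ℝ) : ℂ)
        = ((L.card * ∏ j, g j : ℕ) : ℂ) := by
      push_cast
      rw [← key]
      exact Finset.sum_congr rfl fun ξ _ => (Complex.mul_conj _).symm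
    have hreal : (∑ ξ : (∀ j, Fin (g j)), Complex.normSq (S ξ))
        = ((L.card * ∏ j, g j : ℕ) : ℝ) := by exact_mod_cast hsum
    set ξ0 : ∀ j, Fin (g j) := fun j => ⟨0, hgpos j⟩ with hξ0
    have hS0 : S ξ0 = (L.card : ℂ) := by
      rw [hSdef]
      simp [hξ0]
    have hlb : ((L.card : ℝ)) * L.card ≤ ((L.card * ∏ j, g j : ℕ) : ℝ) := by
      rw [← hreal]
      have := Finset.single_le_sum
        (fun ξ _ => Complex.normSq_nonneg (S ξ)) (Finset.mem_univ ξ0)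
      rwa [hS0, Complex.normSq_natCast] at this
    have hcard0 : 0 < L.card := by
      rw [hcard, cube_card A a hle]
      exact Finset.prod_pos fun j _ => ha j
    have hmul : (L.card : ℝ) * L.card ≤ (L.card : ℝ) * ∏ j, (g j : ℝ) := by
      push_cast at hlb ⊢
      linarith
    have hpos : (0 : ℝ) < (L.card : ℝ) := by exact_mod_cast hcard0
    have hfin : (L.card : ℝ) ≤ ∏ j, (g j : ℝ) := le_of_mul_le_mul_left hmul hpos
    exact_mod_cast hfin
  -- conclude g j = a j for all j
  have hprodle : ∏ j, a j ≤ ∏ j, g j := by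
    rw [← cube_card A a hle, ← hcard]
    exact hub
  have hga : ∀ j, g j = a j := by
    by_contra hc
    push_neg at hc
    obtain ⟨k, hk⟩ := hc
    have hlt : ∏ j, g j < ∏ j, a j :=
      Finset.prod_lt_prod (fun j _ => hgpos j) (fun j _ => hgle j)
        ⟨k, Finset.mem_univ k, lt_of_le_of_ne (hgle k) hk⟩
    omega
  intro j
  have := Nat.gcd_dvd_right (a j) (A j)
  rwa [show Nat.gcd (a j) (A j) = a j from hga j] at this

theorem cube_spectral_iff_dvd {N : ℕ} (A a : Fin N → ℕ) [∀ j, NeZero (A j)]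
    (ha : ∀ j, 0 < a j) (hle : ∀ j, a j ≤ A j) :
    (∃ L : Finset (∀ j, ZMod (A j)), IsSpectrum A (cube A a) L) ↔ ∀ j, a j ∣ A j := by
  constructor
  · rintro ⟨L, hL⟩
    exact forward_dir A a ha hle L hL
  · exact backward_dir A a ha hle
end

section
/- Let G be a finite abelian group, H a subgroup of G, and E ⊆ H. Then E tiles G by translations if and only if E tiles H by translations. -/
/-- For a subset `E` of a subgroup `H` of a finite abelian group `G`,
`E` tiles `G` if and only if `E` tiles `H`. -/
theorem tiles_group_iff_tiles_subgroup {G : Type*} [AddCommGroup G] [Fintype G]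
    (H : AddSubgroup G) (E : Finset G) (hE : ∀ e ∈ E, e ∈ H) :
    (∃ T : Finset G, Tiles E T) ↔
      (∃ T : Finset G, (∀ t ∈ T, t ∈ H) ∧
        ∀ x ∈ H, ∃! p : G × G, p.1 ∈ E ∧ p.2 ∈ T ∧ x = p.1 + p.2) := by
  classical
  constructor
  · rintro ⟨T, hT⟩
    refine ⟨T.filter (· ∈ H), fun t ht => (Finset.mem_filter.mp ht).2, fun x hx => ?_⟩
    obtain ⟨⟨e, t⟩, ⟨he, ht, hxet⟩, huniq⟩ := hT x
    have htH : t ∈ H := by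
      have : t = x - e := by rw [hxet]; abel
      rw [this]; exact H.sub_mem hx (hE e he)
    refine ⟨(e, t), ⟨he, Finset.mem_filter.mpr ⟨ht, htH⟩, hxet⟩, ?_⟩
    rintro ⟨e', t'⟩ ⟨he', ht', hx'⟩
    exact huniq (e', t') ⟨he', (Finset.mem_filter.mp ht').1, hx'⟩
  · rintro ⟨T, hTH, hT⟩
    haveI : Fintype (G ⧸ H) := Fintype.ofFinite _
    refine ⟨(T ×ˢ (Finset.univ : Finset (G ⧸ H))).image (fun p => p.1 + p.2.out), fun x => ?_⟩
    set q : G ⧸ H := QuotientAddGroup.mk x with hq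
    set r : G := q.out with hr
    have hmkr : (QuotientAddGroup.mk r : G ⧸ H) = q := QuotientAddGroup.out_eq' q
    have hxr : x - r ∈ H := by
      have : (QuotientAddGroup.mk x : G ⧸ H) = QuotientAddGroup.mk r := by rw [hmkr]
      exact (QuotientAddGroup.eq_iff_sub_mem.mp this)
    obtain ⟨⟨e, t⟩, ⟨he, ht, hxet⟩, huniq⟩ := hT (x - r) hxr
    refine ⟨(e, t + r), ⟨he, Finset.mem_image.mpr ⟨(t, q), Finset.mem_product.mpr
      ⟨ht, Finset.mem_univ _⟩, rfl⟩, by rw [← add_assoc, ← hxet]; abel⟩, ?_⟩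
    rintro ⟨e', s⟩ ⟨he', hs, hx'⟩
    obtain ⟨⟨t', q'⟩, hmem, hst⟩ := Finset.mem_image.mp hs
    obtain ⟨ht', -⟩ := Finset.mem_product.mp hmem
    -- show q' = q
    have hq' : q' = q := by
      have h1 : (QuotientAddGroup.mk x : G ⧸ H) = QuotientAddGroup.mk q'.out := by
        rw [hx', ← hst]
        have : e' + (t' + q'.out) - q'.out ∈ H := by
          rw [← add_assoc, add_sub_cancel_right]
          exact H.add_mem (hE e' he') (hTH t' ht')
        exact (QuotientAddGroup.eq_iff_sub_mem.mpr this)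
      rw [QuotientAddGroup.out_eq' q'] at h1
      rw [← h1, hq]
    have hsval : s = t' + r := by simp only [hq', hr] at hst ⊢; exact hst.symm
    have hx'' : x - r = e' + t' := by rw [hx', hsval]; show e' + (t' + r) - r = e' + t'; rw [← add_assoc, add_sub_cancel_right]
    have := huniq (e', t') ⟨he', ht', hx''⟩
    have he2 : e' = e := congrArg Prod.fst this
    have ht2 : t' = t := congrArg Prod.snd this
    simp only [Prod.mk.injEq]
    exact ⟨he2, by rw [hsval, ht2]⟩
end

section
/- Let G be a finite abelian group, H a subgroup of G, and E ⊆ H. Then E is a spectral set in G if and only if E is a spectral set in H. -/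
/-- `Λ`, a finite set of (additive) characters of `G`, is a spectrum of `E ⊆ G`:
the characters restricted to `E` are pairwise orthogonal and there are `|E|` of them
(hence they form an orthogonal basis of the functions on `E`). -/
def IsSpectrumChar {G : Type*} [AddCommGroup G] (E : Finset G)
    (L : Finset (AddChar G ℂ)) : Prop :=
  L.card = E.card ∧
  ∀ χ ∈ L, ∀ ψ ∈ L, χ ≠ ψ → ∑ x ∈ E, χ x * (starRingEnd ℂ) (ψ x) = 0


open Finset Function

/-- Restriction of characters to a subgroup, as a monoid hom. -/
def addCharResHom {G : Type*} [AddCommGroup G] (H : AddSubgroup G) :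
    AddChar G ℂ →* AddChar H ℂ where
  toFun χ := χ.compAddMonoidHom H.subtype
  map_one' := by ext x; simp
  map_mul' χ ψ := by ext x; simp

@[simp] lemma addCharResHom_apply {G : Type*} [AddCommGroup G] (H : AddSubgroup G)
    (χ : AddChar G ℂ) (x : H) : addCharResHom H χ x = χ (x : G) := rfl

lemma addCharRes_surjective {G : Type*} [AddCommGroup G] [Fintype G] (H : AddSubgroup G) :
    Function.Surjective (addCharResHom (G := G) H) := by
  classical
  set f := addCharResHom (G := G) H with hf
  -- injection from the kernel into characters of the quotient
  have hker : Nat.card f.ker ≤ Nat.card (G ⧸ H) := by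
    have : Nat.card f.ker ≤ Nat.card (AddChar (G ⧸ H) ℂ) := by
      apply Nat.card_le_card_of_injective
        (fun χ : f.ker => AddChar.toAddMonoidHomEquiv.symm
          (QuotientAddGroup.lift H (AddChar.toAddMonoidHomEquiv (χ : AddChar G ℂ)) (by
            intro x hx
            have hx1 : (χ : AddChar G ℂ) x = 1 := by
              have := χ.2
              rw [MonoidHom.mem_ker] at this
              have := congrArg (fun ψ : AddChar H ℂ => ψ ⟨x, hx⟩) this
              simpa [hf] using this
            simp [hx1])))
      intro χ ψ h
      apply Subtype.ext
      apply AddChar.toAddMonoidHomEquiv.injective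
      ext x
      have := congrArg (fun φ => AddChar.toAddMonoidHomEquiv φ ((x : G ⧸ H))) h
      simpa using this
    rwa [Nat.card_eq_fintype_card (α := AddChar (G ⧸ H) ℂ), AddChar.card_eq,
      ← Nat.card_eq_fintype_card] at this
  have hcardG : Nat.card (AddChar G ℂ) = Nat.card G := by
    rw [Nat.card_eq_fintype_card, Nat.card_eq_fintype_card, AddChar.card_eq]
  have hcardH : Nat.card (AddChar H ℂ) = Nat.card H := by
    rw [Nat.card_eq_fintype_card, Nat.card_eq_fintype_card, AddChar.card_eq]
  have h1 : Nat.card (AddChar G ℂ) = Nat.card f.range * Nat.card f.ker := by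
    rw [Subgroup.card_eq_card_quotient_mul_card_subgroup f.ker]
    congr 1
    exact Nat.card_congr (QuotientGroup.quotientKerEquivRange f).toEquiv
  have h2 : Nat.card G = Nat.card (G ⧸ H) * Nat.card H :=
    AddSubgroup.card_eq_card_quotient_mul_card_addSubgroup H
  have hkpos : 0 < Nat.card f.ker := Nat.card_pos
  have hle : Nat.card (AddChar H ℂ) ≤ Nat.card f.range := by
    have key : Nat.card f.ker * Nat.card (AddChar H ℂ) ≤
        Nat.card f.ker * Nat.card f.range := by
      calc Nat.card f.ker * Nat.card (AddChar H ℂ)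
          ≤ Nat.card (G ⧸ H) * Nat.card H := by
            rw [hcardH]; exact Nat.mul_le_mul_right _ hker
        _ = Nat.card (AddChar G ℂ) := by rw [hcardG, h2]
        _ = Nat.card f.ker * Nat.card f.range := by rw [h1, Nat.mul_comm]
    exact Nat.le_of_mul_le_mul_left key hkpos
  have : f.range = ⊤ := Subgroup.eq_top_of_le_card _ hle
  intro ψ
  have : ψ ∈ f.range := this ▸ Subgroup.mem_top ψ
  exact this

/-- For a subset `E` of a subgroup `H` of a finite abelian group `G`,
`E` is spectral in `G` if and only if `E` is spectral in `H`. -/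
theorem spectral_group_iff_spectral_subgroup {G : Type*} [AddCommGroup G] [Fintype G]
    [DecidableEq G] (H : AddSubgroup G) [DecidablePred (· ∈ H)]
    (E : Finset G) (hE : ∀ e ∈ E, e ∈ H) :
    (∃ L : Finset (AddChar G ℂ), IsSpectrumChar E L) ↔
      (∃ L : Finset (AddChar H ℂ),
        IsSpectrumChar (E.subtype (· ∈ H)) L) := by
  classical
  have hmap : (E.subtype (· ∈ H)).map (Embedding.subtype _) = E :=
    Finset.subtype_map_of_mem hE
  have hcardE : (E.subtype (· ∈ H)).card = E.card := by
    rw [← Finset.card_map (Embedding.subtype (· ∈ H)), hmap]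
  have hsum : ∀ (g : G → ℂ), ∑ x ∈ E, g x = ∑ x ∈ E.subtype (· ∈ H), g (x : G) := by
    intro g
    conv_lhs => rw [← hmap]
    rw [Finset.sum_map]
    simp
  rcases E.eq_empty_or_nonempty with hEe | ⟨e, he⟩
  · subst hEe
    constructor <;> intro _ <;> exact ⟨∅, by simp [IsSpectrumChar]⟩
  constructor
  · rintro ⟨L, hLcard, hLorth⟩
    have hinj : Set.InjOn (addCharResHom H) L := by
      intro χ hχ ψ hψ h
      by_contra hne
      have h0 := hLorth χ hχ ψ hψ hne
      have heq : ∀ x ∈ E, χ x = ψ x := by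
        intro x hx
        have := congrArg (fun φ : AddChar H ℂ => φ ⟨x, hE x hx⟩) h
        simpa using this
      rw [Finset.sum_congr rfl (fun x hx => by rw [heq x hx])] at h0
      have hpos : (0 : ℝ) < ∑ x ∈ E, Complex.normSq (ψ x) := by
        apply Finset.sum_pos'
        · intro i _; exact Complex.normSq_nonneg _
        · refine ⟨e, he, ?_⟩
          have : ψ e ≠ 0 := by
            intro h0'
            have : ψ e * ψ (-e) = 1 := by
              rw [← AddChar.map_add_eq_mul, add_neg_cancel, AddChar.map_zero_eq_one]
            rw [h0', zero_mul] at this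
            exact one_ne_zero this.symm
          exact Complex.normSq_pos.2 this
      have : ∑ x ∈ E, ψ x * (starRingEnd ℂ) (ψ x) =
          ((∑ x ∈ E, Complex.normSq (ψ x) : ℝ) : ℂ) := by
        push_cast
        exact Finset.sum_congr rfl fun x _ => (Complex.mul_conj _)
      rw [this] at h0
      exact_mod_cast hpos.ne' (by exact_mod_cast h0)
    refine ⟨L.image (addCharResHom H), ?_, ?_⟩
    · rw [Finset.card_image_of_injOn hinj, hLcard, hcardE]
    · intro χ' hχ' ψ' hψ' hne
      obtain ⟨χ, hχ, rfl⟩ := Finset.mem_image.1 hχ'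
      obtain ⟨ψ, hψ, rfl⟩ := Finset.mem_image.1 hψ'
      have hne' : χ ≠ ψ := fun h => hne (by rw [h])
      have := hLorth χ hχ ψ hψ hne'
      rw [hsum] at this
      simpa using this
  · rintro ⟨L, hLcard, hLorth⟩
    have hsurj := addCharRes_surjective H
    set s : AddChar H ℂ → AddChar G ℂ := surjInv hsurj with hs
    have hsec : ∀ ψ, addCharResHom H (s ψ) = ψ := surjInv_eq hsurj
    have hsinj : Injective s := injective_surjInv hsurj
    refine ⟨L.image s, ?_, ?_⟩
    · rw [Finset.card_image_of_injective _ hsinj, hLcard, hcardE]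
    · intro χ' hχ' ψ' hψ' hne
      obtain ⟨χ, hχ, rfl⟩ := Finset.mem_image.1 hχ'
      obtain ⟨ψ, hψ, rfl⟩ := Finset.mem_image.1 hψ'
      have hne' : χ ≠ ψ := fun h => hne (by rw [h])
      have h0 := hLorth χ hχ ψ hψ hne'
      rw [hsum]
      calc ∑ x ∈ E.subtype (· ∈ H), s χ (x : G) * (starRingEnd ℂ) (s ψ (x : G))
          = ∑ x ∈ E.subtype (· ∈ H), χ x * (starRingEnd ℂ) (ψ x) := by
            apply Finset.sum_congr rfl
            intro x _
            have h1 := congrArg (fun φ : AddChar H ℂ => φ x) (hsec χ)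
            have h2 := congrArg (fun φ : AddChar H ℂ => φ x) (hsec ψ)
            simp only [addCharResHom_apply] at h1 h2
            rw [h1, h2]
        _ = 0 := h0
end
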